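/- Let V be a valuation domain with quotient field K and let W̃ be a residually transcendental extension of the completion V̂ to K̂(X). Then W̃ ∩ K(X) is a residually transcendental extension of V to K(X). -/

import Mathlib

/-- The ring homomorphism `K(X) → L(X)` induced by a field embedding `K → L`. -/
noncomputable def ratMap {K L : Type*} [Field K] [Field L] (f : K →+* L) :
    RatFunc K →+* RatFunc L :=
  RatFunc.mapRingHom (Polynomial.mapRingHom f)
    (by
      intro g hg
      rw [Submonoid.mem_comap]
      rw [mem_nonZeroDivisors_iff_ne_zero] at hg ⊢
      simp only [Polynomial.coe_mapRingHom]
      exact fun h => hg ((Polynomial.map_eq_zero_iff f.injective).mp h))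

/-- A valuation domain `W` of `F(X)` is a *residually transcendental* extension of the
valuation domain `{u ≤ 1}` of `F`: some `θ ∈ W` has residue transcendental over the
residue field of `{u ≤ 1}`, i.e. for every polynomial `g` with coefficients in `{u ≤ 1}`
whose reduction is nonzero (some coefficient has `u = 1`), the value `w(g(θ))` is `1`
(so `g(θ)` is a unit of `W`, and the residue of `θ` is a root of no nonzero reduced
polynomial). -/
def IsResTransExt {F Γ₀ : Type*} [Field F] [LinearOrderedCommGroupWithZero Γ₀]
    (u : Valuation F Γ₀) (W : ValuationSubring (RatFunc F)) : Prop :=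
  ∃ θ : RatFunc F, θ ∈ W ∧ ∀ g : Polynomial F,
    (∀ i, u (g.coeff i) ≤ 1) → (∃ i, u (g.coeff i) = 1) →
    W.valuation (Polynomial.eval₂ (RatFunc.C (K := F)) θ g) = 1

section StmtAux

lemma aux_mul_cancel_le {G : Type*} [LinearOrderedCommGroupWithZero G] {a b c : G}
    (h : a * c ≤ b * c) (hc : c ≠ 0) : a ≤ b := by
  have h2 := mul_le_mul_left h c⁻¹
  rwa [mul_assoc, mul_assoc, mul_inv_cancel₀ hc, mul_one, mul_one] at h2

lemma ratMap_div {K L : Type*} [Field K] [Field L] (ι : K →+* L) (p q : Polynomial K) :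
    ratMap ι (algebraMap (Polynomial K) (RatFunc K) p / algebraMap (Polynomial K) (RatFunc K) q)
      = algebraMap (Polynomial L) (RatFunc L) (p.map ι)
        / algebraMap (Polynomial L) (RatFunc L) (q.map ι) := by
  rw [ratMap, RatFunc.coe_mapRingHom_eq_coe_map, RatFunc.map_apply_div]
  rfl

lemma ratMap_algebraMap {K L : Type*} [Field K] [Field L] (ι : K →+* L) (p : Polynomial K) :
    ratMap ι (algebraMap (Polynomial K) (RatFunc K) p)
      = algebraMap (Polynomial L) (RatFunc L) (p.map ι) := by
  have h : algebraMap (Polynomial K) (RatFunc K) p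
      = algebraMap (Polynomial K) (RatFunc K) p / algebraMap (Polynomial K) (RatFunc K) 1 := by
    simp
  rw [h, ratMap_div]
  simp

lemma ratMap_C {K L : Type*} [Field K] [Field L] (ι : K →+* L) (a : K) :
    ratMap ι (RatFunc.C a) = RatFunc.C (ι a) := by
  rw [← RatFunc.algebraMap_C, ratMap_algebraMap, Polynomial.map_C, RatFunc.algebraMap_C]

lemma aux_comap_val_one {K L : Type*} [Field K] [Field L] (f : RatFunc K →+* RatFunc L)
    (Wt : ValuationSubring (RatFunc L)) (x : RatFunc K)
    (h : Wt.valuation (f x) = 1) : (Wt.comap f).valuation x = 1 := by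
  have hx : x ≠ 0 := by
    rintro rfl
    rw [map_zero, map_zero] at h
    exact zero_ne_one h
  have hmem : x ∈ Wt.comap f := by
    show f x ∈ Wt
    rw [← Wt.valuation_le_one_iff, h]
  have hmem2 : x⁻¹ ∈ Wt.comap f := by
    show f x⁻¹ ∈ Wt
    rw [← Wt.valuation_le_one_iff, map_inv₀, map_inv₀, h, inv_one]
  have h1 : (Wt.comap f).valuation x ≤ 1 := ((Wt.comap f).valuation_le_one_iff _).mpr hmem
  have h2 : (Wt.comap f).valuation x⁻¹ ≤ 1 := ((Wt.comap f).valuation_le_one_iff _).mpr hmem2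
  have h3 : (Wt.comap f).valuation x * (Wt.comap f).valuation x⁻¹ = 1 := by
    rw [← map_mul, mul_inv_cancel₀ hx, map_one]
  refine le_antisymm h1 ?_
  calc (1 : (Wt.comap f).ValueGroup)
      = (Wt.comap f).valuation x * (Wt.comap f).valuation x⁻¹ := h3.symm
    _ ≤ (Wt.comap f).valuation x * 1 := mul_le_mul_right h2 _
    _ = (Wt.comap f).valuation x := mul_one _

variable {K L Γ₀ : Type*} [Field K] [Field L] [LinearOrderedCommGroupWithZero Γ₀]
variable {vhat : Valuation L Γ₀} {Wt : ValuationSubring (RatFunc L)} {θ : RatFunc L}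

lemma aux_C_ne_zero {a : L} (ha : a ≠ 0) : (RatFunc.C a : RatFunc L) ≠ 0 := by
  simpa using ha

lemma aux_scalar_le_iff (hWt : ∀ x : L, RatFunc.C x ∈ Wt ↔ vhat x ≤ 1)
    {a b : L} (hb : b ≠ 0) :
    Wt.valuation (RatFunc.C a) ≤ Wt.valuation (RatFunc.C b) ↔ vhat a ≤ vhat b := by
  have hvb : vhat b ≠ 0 := by simpa [Valuation.zero_iff] using hb
  have hCb : Wt.valuation (RatFunc.C b) ≠ 0 := by
    simpa [Valuation.zero_iff] using aux_C_ne_zero hb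
  have key : Wt.valuation (RatFunc.C (a / b)) ≤ 1 ↔ vhat (a / b) ≤ 1 := by
    rw [Wt.valuation_le_one_iff]; exact hWt _
  rw [map_div₀, map_div₀, map_div₀] at key
  rw [div_le_one₀ (lt_of_le_of_ne (zero_le') (Ne.symm hCb)),
      div_le_one₀ (lt_of_le_of_ne (zero_le') (Ne.symm hvb))] at key
  exact key

lemma aux_scalar_lt (hWt : ∀ x : L, RatFunc.C x ∈ Wt ↔ vhat x ≤ 1)
    {a b : L} (h : vhat a < vhat b) :
    Wt.valuation (RatFunc.C a) < Wt.valuation (RatFunc.C b) := by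
  have hb : b ≠ 0 := by
    rintro rfl; simp at h
  rcases eq_or_ne a 0 with rfl | ha
  · have : Wt.valuation (RatFunc.C b) ≠ 0 := by
      simpa [Valuation.zero_iff] using aux_C_ne_zero hb
    simpa [zero_lt_iff] using this
  · rw [lt_iff_not_ge] at h ⊢
    exact fun hc => h ((aux_scalar_le_iff hWt ha).mp hc)

/-- The value of a nonzero polynomial evaluated at a residually transcendental `θ`
is the value of its coefficient of maximal value. -/
lemma aux_poly_val
    (hθ : ∀ g : Polynomial L, (∀ i, vhat (g.coeff i) ≤ 1) → (∃ i, vhat (g.coeff i) = 1) →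
      Wt.valuation (Polynomial.eval₂ (RatFunc.C (K := L)) θ g) = 1)
    {h : Polynomial L} (hh : h ≠ 0) :
    ∃ c : L, c ≠ 0 ∧
      Wt.valuation (Polynomial.eval₂ (RatFunc.C (K := L)) θ h) =
        Wt.valuation (RatFunc.C c) := by
  obtain ⟨k, hk, hmax⟩ := Finset.exists_max_image h.support (fun i => vhat (h.coeff i))
    (Polynomial.nonempty_support_iff.mpr hh)
  set c := h.coeff k with hc
  have hc0 : c ≠ 0 := Polynomial.mem_support_iff.mp hk
  have hvc : vhat c ≠ 0 := by simpa [Valuation.zero_iff] using hc0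
  refine ⟨c, hc0, ?_⟩
  set h₁ : Polynomial L := Polynomial.C c⁻¹ * h with hh₁
  have hcoeff : ∀ i, vhat (h₁.coeff i) ≤ 1 := by
    intro i
    rw [hh₁, Polynomial.coeff_C_mul, map_mul, map_inv₀]
    by_cases hi : i ∈ h.support
    · rw [inv_mul_le_iff₀ (zero_lt_iff.mpr hvc), mul_one]; exact hmax i hi
    · simp [Polynomial.notMem_support_iff.mp hi]
  have hone : ∃ i, vhat (h₁.coeff i) = 1 := by
    refine ⟨k, ?_⟩
    rw [hh₁, Polynomial.coeff_C_mul, ← hc, inv_mul_cancel₀ hc0, map_one]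
  have h1 := hθ h₁ hcoeff hone
  have hdecomp : h = Polynomial.C c * h₁ := by
    rw [hh₁, ← mul_assoc, ← Polynomial.C_mul, mul_inv_cancel₀ hc0, Polynomial.C_1, one_mul]
  conv_lhs => rw [hdecomp]
  rw [Polynomial.eval₂_mul, Polynomial.eval₂_C, map_mul, h1, mul_one]

/-- `θ` is not a constant. -/
lemma aux_theta_not_const
    (hθ : ∀ g : Polynomial L, (∀ i, vhat (g.coeff i) ≤ 1) → (∃ i, vhat (g.coeff i) = 1) →
      Wt.valuation (Polynomial.eval₂ (RatFunc.C (K := L)) θ g) = 1)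
    (c : L) : θ ≠ RatFunc.C c := by
  intro hθc
  by_cases hv : vhat c ≤ 1
  · have := hθ (Polynomial.X - Polynomial.C c) ?_ ?_
    · rw [hθc] at this
      simp at this
    · intro i
      rcases i with _ | _ | i <;>
        simp [Polynomial.coeff_X, Polynomial.coeff_C, hv]
    · exact ⟨1, by simp⟩
  · push_neg at hv
    have hc0 : c ≠ 0 := by rintro rfl; simp at hv
    have := hθ (Polynomial.C c⁻¹ * Polynomial.X - Polynomial.C 1) ?_ ?_
    · rw [hθc] at this
      rw [Polynomial.eval₂_sub, Polynomial.eval₂_mul, Polynomial.eval₂_C,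
        Polynomial.eval₂_C, Polynomial.eval₂_X, ← map_mul,
        inv_mul_cancel₀ hc0] at this
      simp at this
    · intro i
      rcases i with _ | _ | i <;>
        simp [Polynomial.coeff_X, Polynomial.coeff_C, Polynomial.coeff_C_mul,
          Polynomial.coeff_one, map_inv₀]
      exact inv_le_one_of_one_le₀ (le_of_lt hv)
    · exact ⟨0, by simp⟩
lemma aux_eval₂_C_X (p : Polynomial L) :
    Polynomial.eval₂ (RatFunc.C (K := L)) RatFunc.X p
      = algebraMap (Polynomial L) (RatFunc L) p := by
  induction p using Polynomial.induction_on with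
  | C a => rw [Polynomial.eval₂_C, RatFunc.algebraMap_C]
  | add p q hp hq => rw [Polynomial.eval₂_add, map_add, hp, hq]
  | monomial n a h =>
      rw [pow_succ, ← mul_assoc, Polynomial.eval₂_mul, map_mul, ← h,
        Polynomial.eval₂_X, RatFunc.algebraMap_X]

lemma aux_mem_adjoin_X (E : IntermediateField L (RatFunc L)) (y : RatFunc L) :
    y ∈ IntermediateField.adjoin E {RatFunc.X} := by
  have hpoly : ∀ p : Polynomial L,
      algebraMap (Polynomial L) (RatFunc L) p ∈ IntermediateField.adjoin E {RatFunc.X} := by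
    intro p
    induction p using Polynomial.induction_on with
    | C a =>
        rw [RatFunc.algebraMap_C]
        have h : (RatFunc.C a : RatFunc L) = algebraMap E (RatFunc L) (algebraMap L E a) := by
          rw [← IsScalarTower.algebraMap_apply, RatFunc.algebraMap_eq_C]
        rw [h]
        exact IntermediateField.algebraMap_mem _ _
    | add p q hp hq => rw [map_add]; exact add_mem hp hq
    | monomial n a h =>
        rw [pow_succ, ← mul_assoc, map_mul, RatFunc.algebraMap_X]
        exact mul_mem h (IntermediateField.mem_adjoin_simple_self E RatFunc.X)
  rw [← RatFunc.num_div_denom y]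
  exact div_mem (hpoly _) (hpoly _)

/-- `X` is integral over `L(θ)` when `θ` is not constant. -/
lemma aux_X_integral (hnc : ∀ c : L, θ ≠ RatFunc.C c) :
    IsIntegral (IntermediateField.adjoin L {θ}) (RatFunc.X : RatFunc L) := by
  set E := IntermediateField.adjoin L {θ} with hE
  have hθE : θ ∈ E := IntermediateField.mem_adjoin_simple_self L θ
  have hq0 : θ.denom ≠ 0 := θ.denom_ne_zero
  have hQ0 : algebraMap (Polynomial L) (RatFunc L) θ.denom ≠ 0 := by
    simpa using hq0
  set A : Polynomial E := θ.num.map (algebraMap L E)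
      - Polynomial.C (⟨θ, hθE⟩ : E) * θ.denom.map (algebraMap L E) with hA
  have heval : Polynomial.eval₂ (algebraMap E (RatFunc L)) RatFunc.X A = 0 := by
    rw [hA, Polynomial.eval₂_sub, Polynomial.eval₂_mul, Polynomial.eval₂_C,
      Polynomial.eval₂_map, Polynomial.eval₂_map,
      ← IsScalarTower.algebraMap_eq L E (RatFunc L),
      RatFunc.algebraMap_eq_C, aux_eval₂_C_X, aux_eval₂_C_X,
      IntermediateField.algebraMap_apply]
    show algebraMap (Polynomial L) (RatFunc L) θ.num
      - θ * algebraMap (Polynomial L) (RatFunc L) θ.denom = 0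
    rw [sub_eq_zero]
    exact (div_eq_iff hQ0).mp (RatFunc.num_div_denom θ)
  have hA0 : A ≠ 0 := by
    intro h0
    set d := θ.denom.natDegree with hd
    have hcoeff : A.coeff d = 0 := by rw [h0]; simp
    rw [hA, Polynomial.coeff_sub, Polynomial.coeff_C_mul, Polynomial.coeff_map,
      Polynomial.coeff_map, sub_eq_zero] at hcoeff
    have h1 : ∀ x : L, algebraMap E (RatFunc L) (algebraMap L E x) = RatFunc.C x := by
      intro x
      rw [← IsScalarTower.algebraMap_apply, RatFunc.algebraMap_eq_C]
    have h3 : algebraMap E (RatFunc L) (⟨θ, hθE⟩ : E) = θ := rfl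
    have hcoeff2 : (RatFunc.C (θ.num.coeff d) : RatFunc L)
        = θ * RatFunc.C (θ.denom.coeff d) := by
      rw [← h1, ← h1, hcoeff, map_mul, h3]
    have hlc : θ.denom.coeff d ≠ 0 := by
      rw [hd]
      exact Polynomial.leadingCoeff_ne_zero.mpr hq0
    have hCl : (RatFunc.C (θ.denom.coeff d) : RatFunc L) ≠ 0 := by simpa using hlc
    have : θ = RatFunc.C (θ.num.coeff d / θ.denom.coeff d) := by
      rw [map_div₀]
      rw [eq_div_iff hCl]
      show θ * RatFunc.C (θ.denom.coeff d) = RatFunc.C (θ.num.coeff d)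
      exact hcoeff2.symm
    exact hnc _ this
  exact (IsAlgebraic.isIntegral ⟨A, hA0, heval⟩)

lemma aux_scalar_cofinal
    (aux_poly_val : ∀ {h : Polynomial L}, h ≠ 0 →
      ∃ c : L, c ≠ 0 ∧ Wt.valuation (Polynomial.eval₂ (RatFunc.C (K := L)) θ h)
        = Wt.valuation (RatFunc.C c))
    (hXint : IsIntegral (IntermediateField.adjoin L {θ}) (RatFunc.X : RatFunc L))
    (aux_mem_adjoin_X : ∀ (E : IntermediateField L (RatFunc L)) (y : RatFunc L),
      y ∈ IntermediateField.adjoin E {(RatFunc.X : RatFunc L)})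
    {y : RatFunc L} (hy : y ≠ 0) :
    ∃ u : L, u ≠ 0 ∧ Wt.valuation (RatFunc.C u) ≤ Wt.valuation y := by
  rcases le_or_gt 1 (Wt.valuation y) with hge | hlt
  · exact ⟨1, one_ne_zero, by simpa using hge⟩
  set E := IntermediateField.adjoin L {θ} with hE
  haveI : FiniteDimensional E (IntermediateField.adjoin E {(RatFunc.X : RatFunc L)}) :=
    IntermediateField.adjoin.finiteDimensional hXint
  set w : RatFunc L := y⁻¹ with hw
  have hw0 : w ≠ 0 := inv_ne_zero hy
  have hy0 : Wt.valuation y ≠ 0 := by simpa [Valuation.zero_iff] using hy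
  have hgw : 1 < Wt.valuation w := by
    rw [hw, map_inv₀]
    exact (one_lt_inv₀ (zero_lt_iff.mpr hy0)).mpr hlt
  have hgw0 : Wt.valuation w ≠ 0 := by simpa [Valuation.zero_iff] using hw0
  have hwint : IsIntegral E w := by
    have hY : IsIntegral E
        (⟨w, aux_mem_adjoin_X E w⟩ : IntermediateField.adjoin E {(RatFunc.X : RatFunc L)}) :=
      IsIntegral.of_finite E _
    exact IntermediateField.isIntegral_iff.mp hY
  obtain ⟨P, hmonic, hev⟩ := hwint
  set d := P.natDegree with hd
  have hd0 : d ≠ 0 := by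
    intro h
    rw [(Polynomial.Monic.natDegree_eq_zero hmonic).mp h] at hev
    simp at hev
  have hexp : Polynomial.eval₂ (algebraMap E (RatFunc L)) w P
      = (∑ i ∈ Finset.range d, algebraMap E (RatFunc L) (P.coeff i) * w ^ i) + w ^ d := by
    rw [Polynomial.eval₂_eq_sum_range, Finset.sum_range_succ, ← hd,
      Polynomial.Monic.coeff_natDegree hmonic, map_one, one_mul]
  rw [hexp] at hev
  have hwd : w ^ d = -∑ i ∈ Finset.range d, algebraMap E (RatFunc L) (P.coeff i) * w ^ i := by
    linear_combination hev
  have hvwd : (Wt.valuation w) ^ d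
      = Wt.valuation (∑ i ∈ Finset.range d, algebraMap E (RatFunc L) (P.coeff i) * w ^ i) := by
    rw [← map_pow, hwd, Valuation.map_neg]
  obtain ⟨j, hj, hjsup⟩ := Finset.exists_max_image (Finset.range d)
    (fun i => Wt.valuation (algebraMap E (RatFunc L) (P.coeff i) * w ^ i))
    ⟨0, Finset.mem_range.mpr (Nat.pos_of_ne_zero hd0)⟩
  have hjd : j < d := Finset.mem_range.mp hj
  set cj : RatFunc L := algebraMap E (RatFunc L) (P.coeff j) with hcj
  set gc := Wt.valuation cj with hgc
  have key : (Wt.valuation w) ^ d ≤ gc * (Wt.valuation w) ^ j := by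
    rw [hvwd]
    calc Wt.valuation (∑ i ∈ Finset.range d, algebraMap E (RatFunc L) (P.coeff i) * w ^ i)
        ≤ Wt.valuation (algebraMap E (RatFunc L) (P.coeff j) * w ^ j) := by
          exact Valuation.map_sum_le _ (fun i hi => hjsup i hi)
      _ = gc * (Wt.valuation w) ^ j := by rw [map_mul, map_pow]
  have hpow : (Wt.valuation w) ^ (d - j) * (Wt.valuation w) ^ j ≤ gc * (Wt.valuation w) ^ j := by
    rw [← pow_add, Nat.sub_add_cancel hjd.le]
    exact key
  have h1 : (Wt.valuation w) ^ (d - j) ≤ gc := aux_mul_cancel_le hpow (pow_ne_zero _ hgw0)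
  have h2 : Wt.valuation w ≤ (Wt.valuation w) ^ (d - j) := le_self_pow₀ hgw.le (by omega)
  have hgcw : Wt.valuation w ≤ gc := h2.trans h1
  have hgc0 : gc ≠ 0 := ((zero_lt_one.trans (lt_of_lt_of_le hgw hgcw))).ne'
  have hcj0 : cj ≠ 0 := by
    intro h
    exact hgc0 (by rw [hgc, h, map_zero])
  have hcjE : cj ∈ E := by
    rw [hcj, IntermediateField.algebraMap_apply]
    exact SetLike.coe_mem _
  rw [hE] at hcjE
  obtain ⟨r, s, hrs⟩ := (IntermediateField.mem_adjoin_simple_iff L cj).mp hcjE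
  have haeval : ∀ t : Polynomial L,
      Polynomial.aeval θ t = Polynomial.eval₂ (RatFunc.C (K := L)) θ t := by
    intro t
    rw [Polynomial.aeval_def, RatFunc.algebraMap_eq_C]
  have hs0 : Polynomial.aeval θ s ≠ 0 := by
    intro h; rw [h, div_zero] at hrs; exact hcj0 hrs
  have hr0 : Polynomial.aeval θ r ≠ 0 := by
    intro h; rw [h, zero_div] at hrs; exact hcj0 hrs
  have hrp : r ≠ 0 := fun h => hr0 (by rw [h]; simp)
  have hsp : s ≠ 0 := fun h => hs0 (by rw [h]; simp)
  obtain ⟨cr, hcr0, hcr⟩ := aux_poly_val hrp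
  obtain ⟨cs, hcs0, hcs⟩ := aux_poly_val hsp
  have hCcr0 : Wt.valuation (RatFunc.C cr) ≠ 0 := by
    simpa [Valuation.zero_iff] using (by simpa using hcr0 : (RatFunc.C cr : RatFunc L) ≠ 0)
  have hCcs0 : Wt.valuation (RatFunc.C cs) ≠ 0 := by
    simpa [Valuation.zero_iff] using (by simpa using hcs0 : (RatFunc.C cs : RatFunc L) ≠ 0)
  have hgc_eq : gc = Wt.valuation (RatFunc.C cr) / Wt.valuation (RatFunc.C cs) := by
    rw [hgc]
    show Wt.valuation cj = _
    rw [hrs, map_div₀, haeval, haeval, hcr, hcs]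
  refine ⟨cs * cr⁻¹, by simp [hcs0, hcr0], ?_⟩
  have heq : Wt.valuation (RatFunc.C (cs * cr⁻¹)) = gc⁻¹ := by
    rw [map_mul, map_inv₀, map_mul, map_inv₀, hgc_eq]
    rw [inv_div]
    rw [div_eq_mul_inv]
  rw [heq]
  have hyw : Wt.valuation y = (Wt.valuation w)⁻¹ := by
    rw [hw, map_inv₀, inv_inv]
  rw [hyw]
  exact (inv_le_inv₀ (zero_lt_iff.mpr hgc0) (zero_lt_iff.mpr hgw0)).mpr hgcw

lemma aux_approx (ι : K →+* L)
    (hdense : ∀ (y : L) (γ : Γ₀), γ ≠ 0 → ∃ b : K, vhat (y - ι b) < γ)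
    (hcof : ∀ {y : RatFunc L}, y ≠ 0 → ∃ u : L, u ≠ 0 ∧
      Wt.valuation (RatFunc.C u) ≤ Wt.valuation y)
    (hsc_lt : ∀ {a b : L}, vhat a < vhat b →
      Wt.valuation (RatFunc.C a) < Wt.valuation (RatFunc.C b))
    (y : RatFunc L) {ρ : Wt.ValueGroup} (hρ : ρ ≠ 0) :
    ∃ z : RatFunc K, Wt.valuation (ratMap ι z - y) < ρ := by
  -- small scalar values below any bound
  have hsmall : ∀ (δ : Wt.ValueGroup), δ ≠ 0 → ∃ ε : Γ₀, ε ≠ 0 ∧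
      ∀ a : L, vhat a < ε → Wt.valuation (RatFunc.C a) < δ := by
    intro δ hδ
    rcases le_or_gt δ 1 with h1 | h1
    · obtain ⟨y₀, hy₀⟩ := Wt.valuation_surjective δ
      have hy₀0 : y₀ ≠ 0 := by
        intro h; rw [h, map_zero] at hy₀; exact hδ hy₀.symm
      obtain ⟨u, hu0, hu⟩ := hcof hy₀0
      exact ⟨vhat u, by simpa [Valuation.zero_iff] using hu0,
        fun a ha => lt_of_lt_of_le (hsc_lt ha) (hy₀ ▸ hu)⟩
    · refine ⟨1, one_ne_zero, fun a ha => ?_⟩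
      have h2 : Wt.valuation (RatFunc.C a) < Wt.valuation (RatFunc.C 1) :=
        hsc_lt (by rwa [map_one])
      rw [map_one, map_one] at h2
      exact h2.trans h1
  -- polynomials with small coefficients have small value
  have hpb : ∀ (N : ℕ) (δ : Wt.ValueGroup), δ ≠ 0 → ∃ ε : Γ₀, ε ≠ 0 ∧
      ∀ r : Polynomial L, r.natDegree < N → (∀ i, vhat (r.coeff i) < ε) →
        Wt.valuation (algebraMap (Polynomial L) (RatFunc L) r) < δ := by
    intro N δ hδ
    set B := (max 1 (Wt.valuation (RatFunc.X : RatFunc L))) ^ N with hB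
    have hB0 : B ≠ 0 :=
      pow_ne_zero _ ((lt_of_lt_of_le zero_lt_one (le_max_left _ _)).ne')
    obtain ⟨ε, hε0, hε⟩ := hsmall (δ / B) (div_ne_zero hδ hB0)
    refine ⟨ε, hε0, fun r hrN hrc => ?_⟩
    have hrepr : algebraMap (Polynomial L) (RatFunc L) r
        = ∑ i ∈ Finset.range N, RatFunc.C (r.coeff i) * RatFunc.X ^ i := by
      conv_lhs => rw [r.as_sum_range' N hrN]
      rw [map_sum]
      refine Finset.sum_congr rfl (fun i _ => ?_)
      rw [← Polynomial.C_mul_X_pow_eq_monomial, map_mul, map_pow,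
        RatFunc.algebraMap_C, RatFunc.algebraMap_X]
    rw [hrepr]
    refine Valuation.map_sum_lt _ hδ (fun i hi => ?_)
    rw [map_mul, map_pow]
    rcases eq_or_ne (r.coeff i) 0 with h | h
    · rw [h, map_zero, map_zero, zero_mul]
      exact zero_lt_iff.mpr hδ
    · have hXB : (Wt.valuation (RatFunc.X : RatFunc L)) ^ i ≤ B := by
        calc (Wt.valuation (RatFunc.X : RatFunc L)) ^ i
            ≤ (max 1 (Wt.valuation (RatFunc.X : RatFunc L))) ^ i :=
              pow_le_pow_left' (le_max_right _ _) i
          _ ≤ B := pow_le_pow_right₀ (le_max_left _ _) (Finset.mem_range.mp hi).le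
      calc Wt.valuation (RatFunc.C (r.coeff i)) * Wt.valuation (RatFunc.X : RatFunc L) ^ i
          = Wt.valuation (RatFunc.X : RatFunc L) ^ i * Wt.valuation (RatFunc.C (r.coeff i)) :=
            mul_comm _ _
        _ < B * (δ / B) := mul_lt_mul_of_le_of_lt_of_nonneg_of_pos hXB (hε _ (hrc i)) zero_le' (zero_lt_iff.mpr hB0)
        _ = δ := by rw [mul_comm, div_mul_cancel₀ _ hB0]
  -- main construction
  rcases eq_or_ne y 0 with rfl | hy
  · refine ⟨0, ?_⟩
    rw [map_zero, sub_zero, map_zero]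
    exact zero_lt_iff.mpr hρ
  set p := y.num with hp
  set q := y.denom with hq
  have hq0 : q ≠ 0 := y.denom_ne_zero
  have hp0 : p ≠ 0 := RatFunc.num_ne_zero hy
  set P := algebraMap (Polynomial L) (RatFunc L) p with hP
  set Q := algebraMap (Polynomial L) (RatFunc L) q with hQ
  have hP0 : P ≠ 0 := by simpa [hP] using hp0
  have hQ0 : Q ≠ 0 := by simpa [hQ] using hq0
  have hgP : Wt.valuation P ≠ 0 := by simpa [Valuation.zero_iff] using hP0
  have hgQ : Wt.valuation Q ≠ 0 := by simpa [Valuation.zero_iff] using hQ0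
  set M := max (Wt.valuation P) (Wt.valuation Q) with hM
  have hM0 : M ≠ 0 := fun h => hgQ (le_antisymm (h ▸ le_max_right _ _) zero_le')
  set δ := min (ρ * Wt.valuation Q * Wt.valuation Q / M) (Wt.valuation Q) with hδdef
  have hδ0 : δ ≠ 0 := by
    rw [hδdef]
    rcases min_cases (ρ * Wt.valuation Q * Wt.valuation Q / M) (Wt.valuation Q) with
      ⟨h, _⟩ | ⟨h, _⟩
    · rw [h]
      exact div_ne_zero (mul_ne_zero (mul_ne_zero hρ hgQ) hgQ) hM0
    · rw [h]; exact hgQ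
  set N := max p.natDegree q.natDegree + 1 with hN
  obtain ⟨ε, hε0, hεb⟩ := hpb N δ hδ0
  choose bb hbb using fun c : L => hdense c ε hε0
  set p' : Polynomial K := ∑ i ∈ Finset.range N, Polynomial.monomial i (bb (p.coeff i)) with hp'
  set q' : Polynomial K := ∑ i ∈ Finset.range N, Polynomial.monomial i (bb (q.coeff i)) with hq'
  -- coefficients of the mapped approximants
  have hcoe : ∀ r : Polynomial L, ∀ i : ℕ,
      ((∑ k ∈ Finset.range N, Polynomial.monomial k (bb (r.coeff k))).map ι).coeff i
        = if i ∈ Finset.range N then ι (bb (r.coeff i)) else 0 := by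
    intro r i
    rw [Polynomial.coeff_map, Polynomial.finset_sum_coeff]
    rw [← Finset.sum_ite_eq' (Finset.range N) i (fun k => ι (bb (r.coeff k)))]
    · rw [map_sum]
      refine Finset.sum_congr rfl (fun k _ => ?_)
      rw [Polynomial.coeff_monomial]
      split_ifs with h
      · rw [h]
      · rw [map_zero]
  have hN1 : 1 ≤ N := by omega
  have hdiffcoeff : ∀ r : Polynomial L, r.natDegree < N → ∀ i,
      vhat (((((∑ k ∈ Finset.range N, Polynomial.monomial k (bb (r.coeff k))).map ι) : Polynomial L)
        - r).coeff i) < ε := by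
    intro r hr i
    rw [Polynomial.coeff_sub, hcoe r i]
    by_cases h : i ∈ Finset.range N
    · rw [if_pos h, ← Valuation.map_neg, neg_sub]
      exact hbb (r.coeff i)
    · rw [if_neg h, zero_sub, Valuation.map_neg]
      rw [Polynomial.coeff_eq_zero_of_natDegree_lt
        (lt_of_lt_of_le hr (by simpa [Finset.mem_range, not_lt] using h)), map_zero]
      exact zero_lt_iff.mpr hε0
  have hdiffdeg : ∀ r : Polynomial L, r.natDegree < N →
      ((((∑ k ∈ Finset.range N, Polynomial.monomial k (bb (r.coeff k))).map ι) : Polynomial L)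
        - r).natDegree < N := by
    intro r hr
    refine lt_of_le_of_lt (Polynomial.natDegree_sub_le _ _) (max_lt ?_ hr)
    refine lt_of_le_of_lt Polynomial.natDegree_map_le ?_
    have hsum : (∑ k ∈ Finset.range N, Polynomial.monomial k (bb (r.coeff k))).natDegree
        ≤ N - 1 := by
      refine Polynomial.natDegree_sum_le_of_forall_le _ _ (fun k hk => ?_)
      exact le_trans (Polynomial.natDegree_monomial_le _)
        (Nat.le_sub_one_of_lt (Finset.mem_range.mp hk))
    omega
  set P'' := algebraMap (Polynomial L) (RatFunc L) (p'.map ι) with hP''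
  set Q'' := algebraMap (Polynomial L) (RatFunc L) (q'.map ι) with hQ''
  have hdegp : p.natDegree < N := by rw [hN]; exact Nat.lt_succ_of_le (le_max_left _ _)
  have hdegq : q.natDegree < N := by rw [hN]; exact Nat.lt_succ_of_le (le_max_right _ _)
  have hPd : Wt.valuation (P'' - P) < δ := by
    rw [hP'', hP, ← map_sub]
    exact hεb _ (hdiffdeg p hdegp) (hdiffcoeff p hdegp)
  have hQd : Wt.valuation (Q'' - Q) < δ := by
    rw [hQ'', hQ, ← map_sub]
    exact hεb _ (hdiffdeg q hdegq) (hdiffcoeff q hdegq)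
  have hδQ : δ ≤ Wt.valuation Q := min_le_right _ _
  have hQQ : Wt.valuation Q'' = Wt.valuation Q := by
    have hid : Q'' = (Q'' - Q) + Q := by ring
    rw [hid]
    exact Wt.valuation.map_add_eq_of_lt_right (lt_of_lt_of_le hQd hδQ)
  have hQ''0 : Q'' ≠ 0 := by
    intro h
    rw [h, map_zero] at hQQ
    exact hgQ hQQ.symm
  refine ⟨algebraMap (Polynomial K) (RatFunc K) p' / algebraMap (Polynomial K) (RatFunc K) q', ?_⟩
  rw [ratMap_div, ← hP'', ← hQ'']
  have hy2 : y = P / Q := (RatFunc.num_div_denom y).symm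
  rw [hy2, div_sub_div _ _ hQ''0 hQ0, map_div₀]
  have hdenom : Wt.valuation (Q'' * Q) = Wt.valuation Q * Wt.valuation Q := by
    rw [map_mul, hQQ]
  have hdenom0 : (0 : Wt.ValueGroup) < Wt.valuation Q * Wt.valuation Q :=
    zero_lt_iff.mpr (mul_ne_zero hgQ hgQ)
  rw [hdenom, div_lt_iff₀ hdenom0]
  -- numerator estimate
  have hδM : δ ≤ ρ * Wt.valuation Q * Wt.valuation Q / M := min_le_left _ _
  have haux : ∀ T : RatFunc L, Wt.valuation T ≤ M → Wt.valuation T ≠ 0 →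
      Wt.valuation (P'' - P) * Wt.valuation Q ≤ ρ * (Wt.valuation Q * Wt.valuation Q) →
      True := fun _ _ _ _ => trivial
  have hbound : ∀ D : RatFunc L, Wt.valuation (D) < δ → ∀ T : RatFunc L,
      Wt.valuation T ≤ M → Wt.valuation (D * T) < ρ * (Wt.valuation Q * Wt.valuation Q) := by
    intro D hD T hT
    rw [map_mul]
    rcases eq_or_ne (Wt.valuation T) 0 with h0 | h0
    · rw [h0, mul_zero]
      exact zero_lt_iff.mpr (mul_ne_zero hρ (mul_ne_zero hgQ hgQ))
    · calc Wt.valuation D * Wt.valuation T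
          < δ * Wt.valuation T := by
            rw [mul_comm (Wt.valuation D) _, mul_comm δ _]
            exact mul_lt_mul_of_le_of_lt_of_nonneg_of_pos (le_refl _) hD zero_le' (zero_lt_iff.mpr h0)
        _ ≤ (ρ * Wt.valuation Q * Wt.valuation Q / M) * M := by
            refine mul_le_mul' hδM hT
        _ = ρ * (Wt.valuation Q * Wt.valuation Q) := by
            rw [div_mul_cancel₀ _ hM0, mul_assoc]
  have hid2 : P'' * Q - Q'' * P = (P'' - P) * Q - (Q'' - Q) * P := by ring
  rw [hid2]
  refine lt_of_le_of_lt (Wt.valuation.map_sub _ _) ?_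
  rw [sup_lt_iff]
  exact ⟨hbound _ hPd _ (le_max_right _ _), hbound _ hQd _ (le_max_left _ _)⟩


end StmtAux

/-- Let `K̂ ⊇ K` be the completion of `K` with respect to `v` (modelled
by a valued field extension `(L, v̂)` of `(K, v)` in which `K` is dense).  If `W̃` is a
residually transcendental extension of `V̂ = {v̂ ≤ 1}` to `K̂(X)`, then `W̃ ∩ K(X)` is a
residually transcendental extension of `V = {v ≤ 1}` to `K(X)`. -/
theorem stmt_12 {K L Γ₀ : Type*} [Field K] [Field L]
    [LinearOrderedCommGroupWithZero Γ₀]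
    (ι : K →+* L) (v : Valuation K Γ₀) (vhat : Valuation L Γ₀)
    (hext : ∀ x : K, vhat (ι x) = v x)
    (hdense : ∀ (y : L) (γ : Γ₀), γ ≠ 0 → ∃ b : K, vhat (y - ι b) < γ)
    (Wt : ValuationSubring (RatFunc L))
    (hWt : ∀ x : L, RatFunc.C x ∈ Wt ↔ vhat x ≤ 1)
    (hrt : IsResTransExt vhat Wt) :
    (∀ x : K, RatFunc.C x ∈ Wt.comap (ratMap ι) ↔ v x ≤ 1) ∧
    IsResTransExt v (Wt.comap (ratMap ι)) := by
  have hpart1 : ∀ x : K, RatFunc.C x ∈ Wt.comap (ratMap ι) ↔ v x ≤ 1 := by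
    intro x
    have : RatFunc.C x ∈ Wt.comap (ratMap ι) ↔ ratMap ι (RatFunc.C x) ∈ Wt := Iff.rfl
    rw [this, ratMap_C, hWt, hext]
  refine ⟨hpart1, ?_⟩
  obtain ⟨θ, hθW, hθ⟩ := hrt
  have hsc_lt : ∀ {a b : L}, vhat a < vhat b →
      Wt.valuation (RatFunc.C a) < Wt.valuation (RatFunc.C b) :=
    fun h => aux_scalar_lt hWt h
  have hnc : ∀ c : L, θ ≠ RatFunc.C c := aux_theta_not_const hθ
  have hpv : ∀ {h : Polynomial L}, h ≠ 0 →
      ∃ c : L, c ≠ 0 ∧ Wt.valuation (Polynomial.eval₂ (RatFunc.C (K := L)) θ h)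
        = Wt.valuation (RatFunc.C c) := fun hh => aux_poly_val hθ hh
  have hXint := aux_X_integral hnc
  have hcof : ∀ {y : RatFunc L}, y ≠ 0 → ∃ u : L, u ≠ 0 ∧
      Wt.valuation (RatFunc.C u) ≤ Wt.valuation y :=
    fun hy => aux_scalar_cofinal (fun hh => hpv hh) hXint aux_mem_adjoin_X hy
  obtain ⟨z, hz⟩ := aux_approx ι hdense (fun hy => hcof hy) (fun h => hsc_lt h) θ
    (one_ne_zero : (1 : Wt.ValueGroup) ≠ 0)
  have hθ1 : Wt.valuation θ ≤ 1 := (Wt.valuation_le_one_iff θ).mpr hθW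
  set a : RatFunc L := ratMap ι z with ha
  have hfz : Wt.valuation a ≤ 1 := by
    have hid : a = (a - θ) + θ := by ring
    rw [hid]
    exact le_trans (Wt.valuation.map_add _ _) (max_le hz.le hθ1)
  refine ⟨z, ?_, ?_⟩
  · show ratMap ι z ∈ Wt
    exact Wt.mem_of_valuation_le_one _ hfz
  · intro g hg1 hg2
    set G := g.map ι with hG
    have hGc1 : ∀ i, vhat (G.coeff i) ≤ 1 := by
      intro i; rw [hG, Polynomial.coeff_map, hext]; exact hg1 i
    have hGc2 : ∃ i, vhat (G.coeff i) = 1 := by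
      obtain ⟨i, hi⟩ := hg2
      exact ⟨i, by rw [hG, Polynomial.coeff_map, hext, hi]⟩
    have hH0 : Wt.valuation (Polynomial.eval₂ (RatFunc.C (K := L)) θ G) = 1 := hθ G hGc1 hGc2
    have hterm : ∀ i : ℕ,
        Wt.valuation (RatFunc.C (G.coeff i) * (a ^ i - θ ^ i)) < 1 := by
      intro i
      rw [map_mul]
      have hCi : Wt.valuation (RatFunc.C (G.coeff i)) ≤ 1 :=
        (Wt.valuation_le_one_iff _).mpr ((hWt _).mpr (hGc1 i))
      have hpow : Wt.valuation (a ^ i - θ ^ i) ≤ Wt.valuation (a - θ) := by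
        have hgeom : a ^ i - θ ^ i
            = (∑ k ∈ Finset.range i, a ^ k * θ ^ (i - 1 - k)) * (a - θ) :=
          (geom_sum₂_mul a θ i).symm
        rw [hgeom, map_mul]
        have hsum1 : Wt.valuation (∑ k ∈ Finset.range i, a ^ k * θ ^ (i - 1 - k)) ≤ 1 := by
          refine Valuation.map_sum_le _ (fun k _ => ?_)
          rw [map_mul, map_pow, map_pow]
          exact mul_le_one' (pow_le_one' hfz _) (pow_le_one' hθ1 _)
        calc Wt.valuation (∑ k ∈ Finset.range i, a ^ k * θ ^ (i - 1 - k)) * Wt.valuation (a - θ)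
            ≤ 1 * Wt.valuation (a - θ) := mul_le_mul_left hsum1 _
          _ = Wt.valuation (a - θ) := one_mul _
      calc Wt.valuation (RatFunc.C (G.coeff i)) * Wt.valuation (a ^ i - θ ^ i)
          ≤ 1 * Wt.valuation (a - θ) := mul_le_mul' hCi hpow
        _ = Wt.valuation (a - θ) := one_mul _
        _ < 1 := hz
    have hdiff : Wt.valuation (Polynomial.eval₂ (RatFunc.C (K := L)) a G
        - Polynomial.eval₂ (RatFunc.C (K := L)) θ G) < 1 := by
      have hid : Polynomial.eval₂ (RatFunc.C (K := L)) a G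
          - Polynomial.eval₂ (RatFunc.C (K := L)) θ G
          = ∑ i ∈ Finset.range (G.natDegree + 1),
              RatFunc.C (G.coeff i) * (a ^ i - θ ^ i) := by
        rw [Polynomial.eval₂_eq_sum_range, Polynomial.eval₂_eq_sum_range,
          ← Finset.sum_sub_distrib]
        exact Finset.sum_congr rfl fun i _ => by ring
      rw [hid]
      exact Valuation.map_sum_lt _ one_ne_zero (fun i _ => hterm i)
    have hval : Wt.valuation (Polynomial.eval₂ (RatFunc.C (K := L)) a G) = 1 := by
      have hid : Polynomial.eval₂ (RatFunc.C (K := L)) a G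
          = (Polynomial.eval₂ (RatFunc.C (K := L)) a G
              - Polynomial.eval₂ (RatFunc.C (K := L)) θ G)
            + Polynomial.eval₂ (RatFunc.C (K := L)) θ G := by ring
      rw [hid, Wt.valuation.map_add_eq_of_lt_right (by rw [hH0]; exact hdiff), hH0]
    have hcomp : ratMap ι (Polynomial.eval₂ (RatFunc.C (K := K)) z g)
        = Polynomial.eval₂ (RatFunc.C (K := L)) a G := by
      have hCcomp : (ratMap ι).comp (RatFunc.C (K := K)) = (RatFunc.C (K := L)).comp ι :=
        RingHom.ext fun x => ratMap_C ι x
      rw [Polynomial.hom_eval₂, hCcomp, hG, Polynomial.eval₂_map, ← ha]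
    exact aux_comap_val_one (ratMap ι) Wt _ (by rw [hcomp, hval])
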